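/- The point x* = 1/(2b + γ) is the unique fixed point of g in [0,∞), it satisfies 0 < x* < 1/γ, and it is globally attracting: for every x ≥ 0 the iterates gⁿ(x) converge to x* as n → ∞. Moreover, defining T : [0,∞)² → [0,∞)² by T(x,y) = (g(y), g(x)), the point (x*, x*) is the unique fixed point of T and for every (x₀,y₀) ∈ [0,∞)² the iterates Tⁿ(x₀,y₀) converge to (x*, x*). -/

import Mathlib

/-- For the complete-information best-reply map g on [0,∞),
x* = 1/(2b+γ) is the unique fixed point in [0,∞), 0 < x* < 1/γ, and it is
globally attracting; moreover (x*,x*) is the unique fixed point of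
T(x,y) = (g y, g x) in [0,∞)² and all orbits of T starting in [0,∞)² converge to it. -/
theorem cournot_nash_global_stability (b γ : ℝ) (hbγ : b ≥ γ) (hγ : 0 < γ)
    (g : ℝ → ℝ)
    (hg1 : ∀ x : ℝ, 0 ≤ x → x < 1 / γ → g x = 1 / (2 * b) - (γ / (2 * b)) * x)
    (hg2 : ∀ x : ℝ, 1 / γ ≤ x → g x = 0)
    (T : ℝ × ℝ → ℝ × ℝ) (hT : ∀ x y : ℝ, T (x, y) = (g y, g x)) :
    g (1 / (2 * b + γ)) = 1 / (2 * b + γ) ∧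
    (∀ x : ℝ, 0 ≤ x → g x = x → x = 1 / (2 * b + γ)) ∧
    0 < 1 / (2 * b + γ) ∧ 1 / (2 * b + γ) < 1 / γ ∧
    (∀ x : ℝ, 0 ≤ x →
      Filter.Tendsto (fun n => g^[n] x) Filter.atTop (nhds (1 / (2 * b + γ)))) ∧
    T (1 / (2 * b + γ), 1 / (2 * b + γ)) = (1 / (2 * b + γ), 1 / (2 * b + γ)) ∧
    (∀ p : ℝ × ℝ, 0 ≤ p.1 → 0 ≤ p.2 → T p = p →
      p = (1 / (2 * b + γ), 1 / (2 * b + γ))) ∧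
    (∀ x₀ y₀ : ℝ, 0 ≤ x₀ → 0 ≤ y₀ →
      Filter.Tendsto (fun n => T^[n] (x₀, y₀)) Filter.atTop
        (nhds (1 / (2 * b + γ), 1 / (2 * b + γ)))) := by
  have hb : 0 < b := lt_of_lt_of_le hγ hbγ
  have h2b : 0 < 2 * b := by linarith
  have hden : 0 < 2 * b + γ := by linarith
  set xs : ℝ := 1 / (2 * b + γ) with hxs
  have hxs_pos : 0 < xs := by positivity
  have hxs_lt : xs < 1 / γ := by
    rw [hxs]
    apply one_div_lt_one_div_of_lt hγ
    linarith
  -- fixed point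
  have hfix : g xs = xs := by
    rw [hg1 xs hxs_pos.le hxs_lt, hxs]
    field_simp
    ring
  -- key contraction estimate
  have hkey : ∀ x : ℝ, 0 ≤ x → 0 ≤ g x ∧ |g x - xs| ≤ (1/2) * |x - xs| := by
    intro x hx
    rcases lt_or_ge x (1 / γ) with hlt | hge
    · rw [hg1 x hx hlt]
      constructor
      · have : γ / (2*b) * x < γ / (2*b) * (1/γ) := by
          apply mul_lt_mul_of_pos_left hlt
          positivity
        have h2 : γ / (2*b) * (1/γ) = 1 / (2*b) := by field_simp
        linarith
      · have h1 : 1 / (2*b) - γ / (2*b) * x - xs = -(γ/(2*b)) * (x - xs) := by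
          have : xs = 1/(2*b) - γ/(2*b) * xs := by
            rw [hxs]; field_simp; ring
          linarith [this]
        rw [h1, abs_mul, abs_neg]
        have hk : |γ / (2*b)| ≤ 1/2 := by
          rw [abs_of_pos (by positivity)]
          rw [div_le_iff₀ h2b]; linarith
        exact mul_le_mul_of_nonneg_right hk (abs_nonneg _)
    · rw [hg2 x hge]
      refine ⟨le_refl 0, ?_⟩
      have hx1 : xs ≤ x := le_trans hxs_lt.le hge
      rw [abs_of_nonpos (by linarith), abs_of_nonneg (by linarith)]
      have hinv : (1:ℝ)/γ ≤ x := hge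
      have h3 : 3 * xs ≤ 1/γ := by
        rw [hxs, show 3 * (1/(2*b+γ)) = 3/(2*b+γ) by ring, div_le_div_iff₀ hden hγ]
        nlinarith
      linarith
  -- iterate estimate
  have hiter : ∀ x : ℝ, 0 ≤ x → ∀ n : ℕ,
      0 ≤ g^[n] x ∧ |g^[n] x - xs| ≤ (1/2)^n * |x - xs| := by
    intro x hx n
    induction n with
    | zero => simpa using hx
    | succ n ih =>
      obtain ⟨h1, h2⟩ := ih
      obtain ⟨h3, h4⟩ := hkey _ h1
      rw [Function.iterate_succ_apply']
      refine ⟨h3, ?_⟩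
      calc |g (g^[n] x) - xs| ≤ (1/2) * |g^[n] x - xs| := h4
        _ ≤ (1/2) * ((1/2)^n * |x - xs|) := by
            apply mul_le_mul_of_nonneg_left h2 (by norm_num)
        _ = (1/2)^(n+1) * |x - xs| := by ring
  have hhalf : Filter.Tendsto (fun n : ℕ => ((1:ℝ)/2)^n) Filter.atTop (nhds 0) := by
    apply tendsto_pow_atTop_nhds_zero_of_lt_one <;> norm_num
  have htend : ∀ x : ℝ, 0 ≤ x →
      Filter.Tendsto (fun n => g^[n] x) Filter.atTop (nhds xs) := by
    intro x hx
    rw [tendsto_iff_dist_tendsto_zero]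
    have hub : ∀ n : ℕ, dist (g^[n] x) xs ≤ (1/2)^n * |x - xs| := by
      intro n; rw [Real.dist_eq]; exact (hiter x hx n).2
    have hlim : Filter.Tendsto (fun n : ℕ => ((1:ℝ)/2)^n * |x - xs|)
        Filter.atTop (nhds 0) := by
      simpa using hhalf.mul_const |x - xs|
    exact squeeze_zero (fun n => dist_nonneg) hub hlim
  -- uniqueness for g
  have huniq : ∀ x : ℝ, 0 ≤ x → g x = x → x = xs := by
    intro x hx hfx
    have := (hkey x hx).2
    rw [hfx] at this
    have h0 : |x - xs| ≤ 0 := by linarith [abs_nonneg (x - xs)]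
    have := abs_eq_zero.mp (le_antisymm h0 (abs_nonneg _))
    linarith
  refine ⟨hfix, huniq, hxs_pos, hxs_lt, htend, ?_, ?_, ?_⟩
  · rw [hT, hfix]
  · rintro ⟨x, y⟩ hx hy hp
    simp only at hx hy
    rw [hT] at hp
    have hgy : g y = x := congrArg Prod.fst hp
    have hgx : g x = y := congrArg Prod.snd hp
    have h1 := (hkey x hx).2
    have h2 := (hkey y hy).2
    rw [hgx] at h1; rw [hgy] at h2
    have hx0 : |x - xs| = 0 := by
      have := abs_nonneg (x - xs); have := abs_nonneg (y - xs)
      apply le_antisymm _ (abs_nonneg _); linarith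
    have hy0 : |y - xs| = 0 := by
      have := abs_nonneg (x - xs)
      apply le_antisymm _ (abs_nonneg _); linarith
    have hxe : x = xs := by have := abs_eq_zero.mp hx0; linarith
    have hye : y = xs := by have := abs_eq_zero.mp hy0; linarith
    rw [hxe, hye]
  · intro x₀ y₀ hx₀ hy₀
    -- iterate estimate for T
    have hTiter : ∀ n : ℕ, 0 ≤ (T^[n] (x₀, y₀)).1 ∧ 0 ≤ (T^[n] (x₀, y₀)).2 ∧
        |(T^[n] (x₀, y₀)).1 - xs| ≤ (1/2)^n * (|x₀ - xs| + |y₀ - xs|) ∧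
        |(T^[n] (x₀, y₀)).2 - xs| ≤ (1/2)^n * (|x₀ - xs| + |y₀ - xs|) := by
      intro n
      induction n with
      | zero =>
        simp only [Function.iterate_zero, id_eq, pow_zero, one_mul]
        exact ⟨hx₀, hy₀, by linarith [abs_nonneg (y₀ - xs)],
          by linarith [abs_nonneg (x₀ - xs)]⟩
      | succ n ih =>
        obtain ⟨h1, h2, h3, h4⟩ := ih
        rw [Function.iterate_succ_apply']
        set q := T^[n] (x₀, y₀) with hq
        have hTq : T q = (g q.2, g q.1) := by
          rw [← hT q.1 q.2]
        rw [hTq]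
        obtain ⟨ha, hb2⟩ := hkey q.1 h1
        obtain ⟨hc, hd⟩ := hkey q.2 h2
        refine ⟨hc, ha, ?_, ?_⟩
        · calc |g q.2 - xs| ≤ (1/2) * |q.2 - xs| := hd
            _ ≤ (1/2) * ((1/2)^n * (|x₀ - xs| + |y₀ - xs|)) := by
                apply mul_le_mul_of_nonneg_left h4 (by norm_num)
            _ = (1/2)^(n+1) * (|x₀ - xs| + |y₀ - xs|) := by ring
        · calc |g q.1 - xs| ≤ (1/2) * |q.1 - xs| := hb2
            _ ≤ (1/2) * ((1/2)^n * (|x₀ - xs| + |y₀ - xs|)) := by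
                apply mul_le_mul_of_nonneg_left h3 (by norm_num)
            _ = (1/2)^(n+1) * (|x₀ - xs| + |y₀ - xs|) := by ring
    have hlim : Filter.Tendsto (fun n : ℕ => ((1:ℝ)/2)^n * (|x₀ - xs| + |y₀ - xs|))
        Filter.atTop (nhds 0) := by
      simpa using hhalf.mul_const (|x₀ - xs| + |y₀ - xs|)
    have h1 : Filter.Tendsto (fun n => (T^[n] (x₀, y₀)).1) Filter.atTop (nhds xs) := by
      rw [tendsto_iff_dist_tendsto_zero]
      exact squeeze_zero (fun n => dist_nonneg)
        (fun n => by rw [Real.dist_eq]; exact (hTiter n).2.2.1) hlim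
    have h2 : Filter.Tendsto (fun n => (T^[n] (x₀, y₀)).2) Filter.atTop (nhds xs) := by
      rw [tendsto_iff_dist_tendsto_zero]
      exact squeeze_zero (fun n => dist_nonneg)
        (fun n => by rw [Real.dist_eq]; exact (hTiter n).2.2.2) hlim
    exact h1.prodMk_nhds h2
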